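/- Let n ≥ 1 and let r : ℂ⁴ → Mat_n(ℂ) ⊗ Mat_n(ℂ), written (v₁,v₂,y₁,y₂) ↦ r(v₁,v₂;y₁,y₂), satisfy the associative Yang–Baxter equation r(v₁,v₂;y₁,y₂)^{12} · r(v₁,v₃;y₂,y₃)^{23} = r(v₁,v₃;y₁,y₃)^{13} · r(v₃,v₂;y₁,y₂)^{12} + r(v₂,v₃;y₂,y₃)^{23} · r(v₁,v₂;y₁,y₃)^{13} for all v₁,v₂,v₃,y₁,y₂,y₃ ∈ ℂ, and the unitarity condition r(v₁,v₂;y₁,y₂) = −τ(r(v₂,v₁;y₂,y₁)) for all arguments. Then r also satisfies the dual equation r(v₂,v₃;y₂,y₃)^{23} · r(v₁,v₃;y₁,y₂)^{12} = r(v₁,v₂;y₁,y₂)^{12} · r(v₂,v₃;y₁,y₃)^{13} + r(v₁,v₃;y₁,y₃)^{13} · r(v₂,v₁;y₂,y₃)^{23} for all v₁,v₂,v₃,y₁,y₂,y₃ ∈ ℂ. -/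

import Mathlib

open scoped TensorProduct
set_option maxHeartbeats 1000000
set_option synthInstance.maxHeartbeats 400000

/-- `Mat_n(ℂ)`, the algebra of complex `n × n` matrices. -/
abbrev MatC (n : ℕ) : Type := Matrix (Fin n) (Fin n) ℂ

/-- `r = Σ aᵢ ⊗ bᵢ ↦ r¹² = Σ aᵢ ⊗ bᵢ ⊗ 1` in `Mat_n(ℂ)^{⊗3}`. -/
noncomputable def leg12 (n : ℕ) :
    (MatC n ⊗[ℂ] MatC n) →ₐ[ℂ] (MatC n ⊗[ℂ] (MatC n ⊗[ℂ] MatC n)) :=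
  Algebra.TensorProduct.map (AlgHom.id ℂ (MatC n))
    (Algebra.TensorProduct.includeLeft : MatC n →ₐ[ℂ] MatC n ⊗[ℂ] MatC n)

/-- `r = Σ aᵢ ⊗ bᵢ ↦ r¹³ = Σ aᵢ ⊗ 1 ⊗ bᵢ` in `Mat_n(ℂ)^{⊗3}`. -/
noncomputable def leg13 (n : ℕ) :
    (MatC n ⊗[ℂ] MatC n) →ₐ[ℂ] (MatC n ⊗[ℂ] (MatC n ⊗[ℂ] MatC n)) :=
  Algebra.TensorProduct.map (AlgHom.id ℂ (MatC n))
    (Algebra.TensorProduct.includeRight : MatC n →ₐ[ℂ] MatC n ⊗[ℂ] MatC n)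

/-- `r = Σ aᵢ ⊗ bᵢ ↦ r²³ = Σ 1 ⊗ aᵢ ⊗ bᵢ` in `Mat_n(ℂ)^{⊗3}`. -/
noncomputable def leg23 (n : ℕ) :
    (MatC n ⊗[ℂ] MatC n) →ₐ[ℂ] (MatC n ⊗[ℂ] (MatC n ⊗[ℂ] MatC n)) :=
  Algebra.TensorProduct.includeRight

/-- The flip `τ(a ⊗ b) = b ⊗ a` of `Mat_n(ℂ) ⊗ Mat_n(ℂ)`. -/
noncomputable def tflip (n : ℕ) : (MatC n ⊗[ℂ] MatC n) ≃ₐ[ℂ] (MatC n ⊗[ℂ] MatC n) :=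
  Algebra.TensorProduct.comm ℂ (MatC n) (MatC n)


noncomputable def sigma3 (n : ℕ) :
    (MatC n ⊗[ℂ] (MatC n ⊗[ℂ] MatC n)) ≃ₐ[ℂ] (MatC n ⊗[ℂ] (MatC n ⊗[ℂ] MatC n)) :=
  (Algebra.TensorProduct.congr AlgEquiv.refl (Algebra.TensorProduct.comm ℂ _ _)).trans <|
  (Algebra.TensorProduct.assoc ℂ ℂ ℂ (MatC n) (MatC n) (MatC n)).symm.trans <|
  (Algebra.TensorProduct.congr (Algebra.TensorProduct.comm ℂ _ _) AlgEquiv.refl).trans <|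
  (Algebra.TensorProduct.assoc ℂ ℂ ℂ (MatC n) (MatC n) (MatC n)).trans <|
  Algebra.TensorProduct.congr AlgEquiv.refl (Algebra.TensorProduct.comm ℂ _ _)

lemma sigma3_tmul (n : ℕ) (a b c : MatC n) :
    sigma3 n (a ⊗ₜ (b ⊗ₜ c)) = c ⊗ₜ (b ⊗ₜ a) := by
  simp [sigma3]

lemma tflip_tflip (n : ℕ) (x : MatC n ⊗[ℂ] MatC n) : tflip n (tflip n x) = x := by
  induction x using TensorProduct.induction_on with
  | zero => simp
  | tmul a b => simp [tflip]
  | add x y hx hy => rw [map_add, map_add, hx, hy]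

lemma sigma3_leg12 (n : ℕ) (x : MatC n ⊗[ℂ] MatC n) :
    sigma3 n (leg12 n x) = leg23 n (tflip n x) := by
  induction x using TensorProduct.induction_on with
  | zero => simp
  | tmul a b =>
      simp [leg12, leg23, tflip, Algebra.TensorProduct.includeLeft_apply,
        Algebra.TensorProduct.includeRight_apply, sigma3_tmul]
  | add x y hx hy => simp [map_add, hx, hy]

lemma sigma3_leg13 (n : ℕ) (x : MatC n ⊗[ℂ] MatC n) :
    sigma3 n (leg13 n x) = leg13 n (tflip n x) := by
  induction x using TensorProduct.induction_on with
  | zero => simp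
  | tmul a b =>
      simp [leg13, tflip, Algebra.TensorProduct.includeRight_apply, sigma3_tmul]
  | add x y hx hy => simp [map_add, hx, hy]

lemma sigma3_leg23 (n : ℕ) (x : MatC n ⊗[ℂ] MatC n) :
    sigma3 n (leg23 n x) = leg12 n (tflip n x) := by
  induction x using TensorProduct.induction_on with
  | zero => simp
  | tmul a b =>
      simp [leg12, leg23, tflip, Algebra.TensorProduct.includeLeft_apply,
        Algebra.TensorProduct.includeRight_apply, sigma3_tmul]
  | add x y hx hy => simp [map_add, hx, hy]

/-- a unitary solution of the associative Yang–Baxter equation also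
satisfies the "dual" associative Yang–Baxter equation. -/
theorem unitary_AYBE_implies_dual_AYBE (n : ℕ) (hn : 1 ≤ n)
    (r : ℂ → ℂ → ℂ → ℂ → MatC n ⊗[ℂ] MatC n)
    (hAYBE : ∀ v₁ v₂ v₃ y₁ y₂ y₃ : ℂ,
      leg12 n (r v₁ v₂ y₁ y₂) * leg23 n (r v₁ v₃ y₂ y₃) =
        leg13 n (r v₁ v₃ y₁ y₃) * leg12 n (r v₃ v₂ y₁ y₂) +
          leg23 n (r v₂ v₃ y₂ y₃) * leg13 n (r v₁ v₂ y₁ y₃))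
    (hunit : ∀ v₁ v₂ y₁ y₂ : ℂ,
      r v₁ v₂ y₁ y₂ = - tflip n (r v₂ v₁ y₂ y₁)) :
    ∀ v₁ v₂ v₃ y₁ y₂ y₃ : ℂ,
      leg23 n (r v₂ v₃ y₂ y₃) * leg12 n (r v₁ v₃ y₁ y₂) =
        leg12 n (r v₁ v₂ y₁ y₂) * leg13 n (r v₂ v₃ y₁ y₃) +
          leg13 n (r v₁ v₃ y₁ y₃) * leg23 n (r v₂ v₁ y₂ y₃) := by

  have hτ : ∀ a b c d : ℂ, tflip n (r a b c d) = - r b a d c := by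
    intro a b c d
    have := hunit a b c d
    rw [this, map_neg, tflip_tflip]
  intro v₁ v₂ v₃ y₁ y₂ y₃
  have h := congrArg (sigma3 n) (hAYBE v₃ v₂ v₁ y₃ y₂ y₁)
  simp only [map_mul, map_add, sigma3_leg12, sigma3_leg13, sigma3_leg23, hτ,
    map_neg, neg_mul, mul_neg, neg_neg] at h
  have nn : ∀ x y : MatC n ⊗[ℂ] (MatC n ⊗[ℂ] MatC n), -x * -y = x * y := fun x y =>
    @neg_mul_neg _ _ NonUnitalNonAssocRing.toHasDistribNeg x y
  rw [nn, nn, nn] at h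
  rw [h, add_comm]
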